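/- Let Ω ⊂ ℝ^N be a bounded open set, let u : Ω → ℝ be measurable, and let γ : [0,1] → L^∞(Ω) be a continuous curve (with respect to the essential supremum norm) such that ∫_Ω sgn(u+γ(0)) dx > 0 and ∫_Ω sgn(u+γ(1)) dx < 0. Then there exists s₀ ∈ [0,1] such that |λ({u+γ(s₀) > 0}) − λ({u+γ(s₀) < 0})| ≤ λ({u+γ(s₀) = 0}). -/

import Mathlib

open MeasureTheory Set


private lemma aux_ae_lt {α : Type*} [MeasurableSpace α] {μ : Measure α} {g : α → ℝ} {ε : ℝ}
    (hε : 0 < ε) (h : eLpNorm g ⊤ μ < ENNReal.ofReal ε) : ∀ᵐ x ∂μ, |g x| < ε := by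
  rw [eLpNorm_exponent_top, eLpNormEssSup] at h
  filter_upwards [ae_le_essSup (f := fun x => (‖g x‖₊ : ENNReal))] with x hx
  have : (‖g x‖₊ : ENNReal) < ENNReal.ofReal ε := lt_of_le_of_lt hx h
  rw [← show ENNReal.ofReal ‖g x‖ = (‖g x‖₊ : ENNReal) from ofReal_norm (g x)] at this
  have h2 : ‖g x‖ < ε := (ENNReal.ofReal_lt_ofReal_iff hε).mp this
  simpa using h2

private lemma aux_mono {α : Type*} [MeasurableSpace α] {μ : Measure α} {Ω : Set α}
    (hΩ : MeasurableSet Ω) {p q : α → Prop} (h : ∀ᵐ x ∂μ.restrict Ω, p x → q x) :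
    μ {x ∈ Ω | p x} ≤ μ {x ∈ Ω | q x} := by
  have e : ∀ r : α → Prop, {x ∈ Ω | r x} = {x | r x} ∩ Ω := by
    intro r; ext x; simp [and_comm]
  rw [e p, e q, ← Measure.restrict_apply' hΩ, ← Measure.restrict_apply' hΩ]
  exact measure_mono_ae (h.mono fun x hx hxp => hx hxp)

private lemma aux_sign_integral {α : Type*} [MeasurableSpace α] {μ : Measure α} {Ω : Set α}
    (hΩ : MeasurableSet Ω) (hfin : μ Ω < ⊤) {v : α → ℝ} (hv : Measurable v) :
    ∫ x in Ω, Real.sign (v x) ∂μ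
      = (μ {x ∈ Ω | 0 < v x}).toReal - (μ {x ∈ Ω | v x < 0}).toReal := by
  haveI : IsFiniteMeasure (μ.restrict Ω) := ⟨by rwa [Measure.restrict_apply_univ]⟩
  have hP : MeasurableSet {x | 0 < v x} := measurableSet_lt measurable_const hv
  have hN : MeasurableSet {x | v x < 0} := measurableSet_lt hv measurable_const
  have hpt : ∀ x, Real.sign (v x)
      = {x | 0 < v x}.indicator (fun _ => (1:ℝ)) x - {x | v x < 0}.indicator (fun _ => (1:ℝ)) x := by
    intro x
    rcases lt_trichotomy (v x) 0 with h | h | h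
    · simp [Real.sign_of_neg h, Set.indicator, h, not_lt.mpr h.le]
    · simp [Real.sign, Set.indicator, h]
    · simp [Real.sign_of_pos h, Set.indicator, h, not_lt.mpr h.le]
  have hint1 : Integrable ({x | 0 < v x}.indicator (fun _ => (1:ℝ))) (μ.restrict Ω) :=
    (integrable_const 1).indicator hP
  have hint2 : Integrable ({x | v x < 0}.indicator (fun _ => (1:ℝ))) (μ.restrict Ω) :=
    (integrable_const 1).indicator hN
  rw [show (fun x => Real.sign (v x))
      = fun x => {x | 0 < v x}.indicator (fun _ => (1:ℝ)) x
          - {x | v x < 0}.indicator (fun _ => (1:ℝ)) x from funext hpt]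
  rw [integral_sub hint1 hint2, integral_indicator_const _ hP, integral_indicator_const _ hN,
    measureReal_restrict_apply hP, measureReal_restrict_apply hN]
  have e1 : {x | 0 < v x} ∩ Ω = {x ∈ Ω | 0 < v x} := by ext x; simp [and_comm]
  have e2 : {x | v x < 0} ∩ Ω = {x ∈ Ω | v x < 0} := by ext x; simp [and_comm]
  rw [e1, e2]; simp [measureReal_def]

private lemma aux_limit {α : Type*} [MeasurableSpace α] {μ : Measure α} {Ω : Set α}
    (hΩ : MeasurableSet Ω) (hfin : μ Ω ≠ ⊤) {v : α → ℝ} (hv : Measurable v)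
    (h : ∀ ε : ℝ, 0 < ε → μ {x ∈ Ω | ε < v x} ≤ μ {x ∈ Ω | v x < ε}) :
    μ {x ∈ Ω | 0 < v x} ≤ μ {x ∈ Ω | v x ≤ 0} := by
  set A : ℕ → Set α := fun n => {x ∈ Ω | 1/((n:ℝ)+1) < v x} with hA
  set B : ℕ → Set α := fun n => {x ∈ Ω | v x < 1/((n:ℝ)+1)} with hB
  have hstep : ∀ m n : ℕ, m ≤ n → 1/((n:ℝ)+1) ≤ 1/((m:ℝ)+1) := by
    intro m n hmn
    apply one_div_le_one_div_of_le (by positivity)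
    have : (m:ℝ) ≤ n := by exact_mod_cast hmn
    linarith
  have hAm : Monotone A := fun m n hmn x hx => ⟨hx.1, lt_of_le_of_lt (hstep m n hmn) hx.2⟩
  have hBm : Antitone B := fun m n hmn x hx => ⟨hx.1, lt_of_lt_of_le hx.2 (hstep m n hmn)⟩
  have hAU : ⋃ n, A n = {x ∈ Ω | 0 < v x} := by
    ext x
    simp only [mem_iUnion, hA, mem_sep_iff]
    constructor
    · rintro ⟨n, hxΩ, hn⟩
      exact ⟨hxΩ, lt_trans (by positivity) hn⟩
    · rintro ⟨hxΩ, hx⟩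
      obtain ⟨n, hn⟩ := exists_nat_one_div_lt hx
      exact ⟨n, hxΩ, hn⟩
  have hBI : ⋂ n, B n = {x ∈ Ω | v x ≤ 0} := by
    ext x
    simp only [mem_iInter, hB, mem_sep_iff]
    constructor
    · intro hx
      refine ⟨(hx 0).1, ?_⟩
      by_contra hc
      push_neg at hc
      obtain ⟨n, hn⟩ := exists_nat_one_div_lt hc
      exact absurd (hx n).2 (not_lt.mpr hn.le)
    · rintro ⟨hxΩ, hx⟩ n
      exact ⟨hxΩ, lt_of_le_of_lt hx (by positivity)⟩
  have hBmeas : ∀ n, NullMeasurableSet (B n) μ := by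
    intro n
    have : B n = Ω ∩ {x | v x < 1/((n:ℝ)+1)} := by ext x; simp [hB, mem_sep_iff]
    rw [this]
    exact (hΩ.inter (measurableSet_lt hv measurable_const)).nullMeasurableSet
  have h1 := tendsto_measure_iUnion_atTop (μ := μ) hAm
  have h2 := tendsto_measure_iInter_atTop hBmeas hBm
    ⟨0, by exact (lt_of_le_of_lt (measure_mono (sep_subset _ _)) hfin.lt_top).ne⟩
  rw [hAU] at h1
  rw [hBI] at h2
  exact le_of_tendsto_of_tendsto' h1 h2 (fun n => h _ (by positivity))

/-- If `γ : [0,1] → L^∞(Ω)` is continuous (in the essential sup norm),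
`∫_Ω sgn(u + γ(0)) dx > 0` and `∫_Ω sgn(u + γ(1)) dx < 0`, then there is `s₀ ∈ [0,1]` with
`|λ({u+γ(s₀)>0}) - λ({u+γ(s₀)<0})| ≤ λ({u+γ(s₀)=0})`. -/
theorem statement18 {N : ℕ} (Ω : Set (EuclideanSpace ℝ (Fin N)))
    (hΩo : IsOpen Ω) (hΩb : Bornology.IsBounded Ω)
    (u : EuclideanSpace ℝ (Fin N) → ℝ) (hu : Measurable u)
    (γ : ℝ → EuclideanSpace ℝ (Fin N) → ℝ)
    (hγm : ∀ s ∈ Icc (0 : ℝ) 1, Measurable (γ s))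
    (hγb : ∀ s ∈ Icc (0 : ℝ) 1, eLpNorm (γ s) ⊤ (volume.restrict Ω) < ⊤)
    (hγc : ∀ s ∈ Icc (0 : ℝ) 1, ∀ ε : ℝ, 0 < ε → ∃ δ : ℝ, 0 < δ ∧
      ∀ t ∈ Icc (0 : ℝ) 1, |t - s| < δ →
        eLpNorm (γ t - γ s) ⊤ (volume.restrict Ω) < ENNReal.ofReal ε)
    (h0 : 0 < ∫ x in Ω, Real.sign (u x + γ 0 x))
    (h1 : (∫ x in Ω, Real.sign (u x + γ 1 x)) < 0) :
    ∃ s₀ ∈ Icc (0 : ℝ) 1,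
      |(volume {x ∈ Ω | 0 < u x + γ s₀ x}).toReal
          - (volume {x ∈ Ω | u x + γ s₀ x < 0}).toReal|
        ≤ (volume {x ∈ Ω | u x + γ s₀ x = 0}).toReal := by
  have hΩm : MeasurableSet Ω := hΩo.measurableSet
  have hfin : volume Ω < ⊤ := hΩb.measure_lt_top
  -- measurability of u + γ s
  have hfm : ∀ s ∈ Icc (0:ℝ) 1, Measurable (fun x => u x + γ s x) :=
    fun s hs => hu.add (hγm s hs)
  -- the sign integral equals difference of measures
  have hg : ∀ s ∈ Icc (0:ℝ) 1, (∫ x in Ω, Real.sign (u x + γ s x))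
      = (volume {x ∈ Ω | 0 < u x + γ s x}).toReal
        - (volume {x ∈ Ω | u x + γ s x < 0}).toReal :=
    fun s hs => aux_sign_integral hΩm hfin (hfm s hs)
  -- finiteness of all the relevant measures
  have hfs : ∀ p : EuclideanSpace ℝ (Fin N) → Prop, volume {x ∈ Ω | p x} ≠ ⊤ :=
    fun p => ((measure_mono (sep_subset _ _)).trans_lt hfin).ne
  -- key comparison lemma
  have key : ∀ s ∈ Icc (0:ℝ) 1, ∀ t ∈ Icc (0:ℝ) 1, ∀ ε : ℝ, 0 < ε →
      eLpNorm (γ t - γ s) ⊤ (volume.restrict Ω) < ENNReal.ofReal ε →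
      ∀ c : ℝ,
        volume {x ∈ Ω | c < u x + γ t x} ≤ volume {x ∈ Ω | c - ε < u x + γ s x}
        ∧ volume {x ∈ Ω | u x + γ t x < c} ≤ volume {x ∈ Ω | u x + γ s x < c + ε} := by
    intro s hs t ht ε hε hlt c
    have hae : ∀ᵐ x ∂(volume.restrict Ω), |γ t x - γ s x| < ε := by
      have := aux_ae_lt hε hlt
      filter_upwards [this] with x hx
      simpa [Pi.sub_apply] using hx
    constructor
    · refine aux_mono hΩm ?_
      filter_upwards [hae] with x hx hc
      have := abs_lt.mp hx
      linarith
    · refine aux_mono hΩm ?_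
      filter_upwards [hae] with x hx hc
      have := abs_lt.mp hx
      linarith
  -- the sup
  set S : Set ℝ := {s | s ∈ Icc (0:ℝ) 1 ∧ 0 < ∫ x in Ω, Real.sign (u x + γ s x)} with hS
  have h0S : (0:ℝ) ∈ S := ⟨⟨le_refl 0, zero_le_one⟩, h0⟩
  have hbdd : BddAbove S := ⟨1, fun s hs => hs.1.2⟩
  set s₀ := sSup S with hs₀def
  have hs₀0 : 0 ≤ s₀ := le_csSup hbdd h0S
  have hs₀1 : s₀ ≤ 1 := csSup_le ⟨0, h0S⟩ (fun s hs => hs.1.2)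
  have hs₀ : s₀ ∈ Icc (0:ℝ) 1 := ⟨hs₀0, hs₀1⟩
  refine ⟨s₀, hs₀, ?_⟩
  -- abbreviations
  set P := volume {x ∈ Ω | 0 < u x + γ s₀ x} with hP
  set Nn := volume {x ∈ Ω | u x + γ s₀ x < 0} with hNn
  set Z := volume {x ∈ Ω | u x + γ s₀ x = 0} with hZ
  have hgs₀ := hg s₀ hs₀
  -- splitting {≤ 0} and {≥ 0}
  have hsplit1 : volume {x ∈ Ω | u x + γ s₀ x ≤ 0} = Nn + Z := by
    have e : {x ∈ Ω | u x + γ s₀ x ≤ 0}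
        = {x ∈ Ω | u x + γ s₀ x < 0} ∪ {x ∈ Ω | u x + γ s₀ x = 0} := by
      ext x; simp only [mem_sep_iff, mem_union]
      constructor
      · rintro ⟨hxΩ, hx⟩
        rcases lt_or_eq_of_le hx with h | h
        · exact Or.inl ⟨hxΩ, h⟩
        · exact Or.inr ⟨hxΩ, h⟩
      · rintro (⟨hxΩ, hx⟩ | ⟨hxΩ, hx⟩)
        · exact ⟨hxΩ, hx.le⟩
        · exact ⟨hxΩ, hx.le⟩
    rw [e]
    refine measure_union ?_ ?_
    · rintro A hA1 hA2 x hx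
      exact absurd ((hA2 hx).2) (ne_of_lt (hA1 hx).2)
    · have : {x ∈ Ω | u x + γ s₀ x = 0} = Ω ∩ {x | u x + γ s₀ x = 0} := by
        ext x; simp [mem_sep_iff]
      rw [this]
      exact hΩm.inter ((hfm s₀ hs₀) (measurableSet_singleton 0))
  have hsplit2 : volume {x ∈ Ω | 0 ≤ u x + γ s₀ x} = P + Z := by
    have e : {x ∈ Ω | 0 ≤ u x + γ s₀ x}
        = {x ∈ Ω | 0 < u x + γ s₀ x} ∪ {x ∈ Ω | u x + γ s₀ x = 0} := by
      ext x; simp only [mem_sep_iff, mem_union]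
      constructor
      · rintro ⟨hxΩ, hx⟩
        rcases lt_or_eq_of_le hx with h | h
        · exact Or.inl ⟨hxΩ, h⟩
        · exact Or.inr ⟨hxΩ, h.symm⟩
      · rintro (⟨hxΩ, hx⟩ | ⟨hxΩ, hx⟩)
        · exact ⟨hxΩ, hx.le⟩
        · exact ⟨hxΩ, hx.ge⟩
    rw [e]
    refine measure_union ?_ ?_
    · rintro A hA1 hA2 x hx
      exact absurd ((hA2 hx).2).symm (ne_of_lt (hA1 hx).2)
    · have : {x ∈ Ω | u x + γ s₀ x = 0} = Ω ∩ {x | u x + γ s₀ x = 0} := by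
        ext x; simp [mem_sep_iff]
      rw [this]
      exact hΩm.inter ((hfm s₀ hs₀) (measurableSet_singleton 0))
  -- inequality (A): P ≤ Nn + Z
  have hA : P ≤ Nn + Z := by
    rcases le_or_gt (∫ x in Ω, Real.sign (u x + γ s₀ x)) 0 with hle | hlt
    · rw [hgs₀, sub_nonpos] at hle
      calc P ≤ Nn := (ENNReal.toReal_le_toReal (hfs _) (hfs _)).mp hle
        _ ≤ Nn + Z := le_self_add
    · -- s₀ < 1
      have hs₀lt1 : s₀ < 1 := by
        rcases lt_or_eq_of_le hs₀1 with h | h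
        · exact h
        · exfalso; rw [h] at hlt; linarith
      rw [← hsplit1]
      refine aux_limit hΩm hfin.ne (hfm s₀ hs₀) ?_
      intro ε hε
      obtain ⟨δ, hδ, hδc⟩ := hγc s₀ hs₀ ε hε
      set t := min 1 (s₀ + δ/2) with htdef
      have ht1 : t ≤ 1 := min_le_left _ _
      have ht0 : 0 ≤ t := le_min zero_le_one (by linarith)
      have hts : s₀ < t := lt_min hs₀lt1 (by linarith)
      have htd : |t - s₀| < δ := by
        rw [abs_of_pos (by linarith)]
        have : t ≤ s₀ + δ/2 := min_le_right _ _
        linarith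
      have ht : t ∈ Icc (0:ℝ) 1 := ⟨ht0, ht1⟩
      have hbound := hδc t ht htd
      have hboundswap : eLpNorm (γ s₀ - γ t) ⊤ (volume.restrict Ω) < ENNReal.ofReal ε := by
        rwa [show γ s₀ - γ t = -(γ t - γ s₀) by ring, eLpNorm_neg]
      -- g t ≤ 0
      have hgt : (∫ x in Ω, Real.sign (u x + γ t x)) ≤ 0 := by
        by_contra hc
        push_neg at hc
        have : t ∈ S := ⟨ht, hc⟩
        exact absurd (le_csSup hbdd this) (not_le.mpr hts)
      have hPN : volume {x ∈ Ω | 0 < u x + γ t x} ≤ volume {x ∈ Ω | u x + γ t x < 0} := by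
        rw [hg t ht, sub_nonpos] at hgt
        exact (ENNReal.toReal_le_toReal (hfs _) (hfs _)).mp hgt
      have k1 := (key t ht s₀ hs₀ ε hε hboundswap ε).1
      have k2 := (key s₀ hs₀ t ht ε hε hbound 0).2
      rw [sub_self] at k1
      rw [zero_add] at k2
      exact (k1.trans hPN).trans k2
  -- inequality (B): Nn ≤ P + Z
  have hB : Nn ≤ P + Z := by
    rcases le_or_gt 0 (∫ x in Ω, Real.sign (u x + γ s₀ x)) with hle | hlt
    · rw [hgs₀, sub_nonneg] at hle
      calc Nn ≤ P := (ENNReal.toReal_le_toReal (hfs _) (hfs _)).mp hle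
        _ ≤ P + Z := le_self_add
    · rw [← hsplit2]
      -- use aux_limit with v = -(u + γ s₀)
      have hkeyB : ∀ ε : ℝ, 0 < ε →
          volume {x ∈ Ω | u x + γ s₀ x < -ε} ≤ volume {x ∈ Ω | -ε < u x + γ s₀ x} := by
        intro ε hε
        obtain ⟨δ, hδ, hδc⟩ := hγc s₀ hs₀ ε hε
        obtain ⟨s, hsS, hslt⟩ := exists_lt_of_lt_csSup ⟨0, h0S⟩ (show s₀ - δ < s₀ by linarith)
        have hsle : s ≤ s₀ := le_csSup hbdd hsS
        have hsd : |s - s₀| < δ := by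
          rw [abs_sub_comm, abs_of_nonneg (by linarith)]
          linarith
        have hbound := hδc s hsS.1 hsd
        have hboundswap : eLpNorm (γ s₀ - γ s) ⊤ (volume.restrict Ω) < ENNReal.ofReal ε := by
          rwa [show γ s₀ - γ s = -(γ s - γ s₀) by ring, eLpNorm_neg]
        have hgspos := hsS.2
        have hPN : volume {x ∈ Ω | u x + γ s x < 0} ≤ volume {x ∈ Ω | 0 < u x + γ s x} := by
          rw [hg s hsS.1, sub_pos] at hgspos
          exact (ENNReal.toReal_le_toReal (hfs _) (hfs _)).mp hgspos.le
        have k1 := (key s hsS.1 s₀ hs₀ ε hε hboundswap (-ε)).2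
        have k2 := (key s₀ hs₀ s hsS.1 ε hε hbound 0).1
        rw [show -ε + ε = 0 by ring] at k1
        rw [zero_sub] at k2
        exact (k1.trans hPN).trans k2
      have := aux_limit hΩm hfin.ne (hfm s₀ hs₀).neg (v := fun x => -(u x + γ s₀ x))
        (fun ε hε => by
          have h1 : {x ∈ Ω | ε < -(u x + γ s₀ x)} = {x ∈ Ω | u x + γ s₀ x < -ε} := by
            ext x; simp only [mem_sep_iff]; constructor <;> (rintro ⟨h, h'⟩; exact ⟨h, by linarith⟩)
          have h2 : {x ∈ Ω | -(u x + γ s₀ x) < ε} = {x ∈ Ω | -ε < u x + γ s₀ x} := by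
            ext x; simp only [mem_sep_iff]; constructor <;> (rintro ⟨h, h'⟩; exact ⟨h, by linarith⟩)
          rw [h1, h2]
          exact hkeyB ε hε)
      have h3 : {x ∈ Ω | 0 < -(u x + γ s₀ x)} = {x ∈ Ω | u x + γ s₀ x < 0} := by
        ext x; simp only [mem_sep_iff]; constructor <;> (rintro ⟨h, h'⟩; exact ⟨h, by linarith⟩)
      have h4 : {x ∈ Ω | -(u x + γ s₀ x) ≤ 0} = {x ∈ Ω | 0 ≤ u x + γ s₀ x} := by
        ext x; simp only [mem_sep_iff]; constructor <;> (rintro ⟨h, h'⟩; exact ⟨h, by linarith⟩)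
      rw [h3, h4] at this
      exact this
  -- conclude
  rw [abs_sub_le_iff]
  constructor
  · have := (ENNReal.toReal_le_toReal (hfs _) (by
      exact ENNReal.add_ne_top.mpr ⟨hfs _, hfs _⟩)).mpr hA
    rw [ENNReal.toReal_add (hfs _) (hfs _)] at this
    linarith
  · have := (ENNReal.toReal_le_toReal (hfs _) (by
      exact ENNReal.add_ne_top.mpr ⟨hfs _, hfs _⟩)).mpr hB
    rw [ENNReal.toReal_add (hfs _) (hfs _)] at this
    linarith
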